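/- For all n ≥ k ≥ 0, u(n,k) = Σ_{i=k}^{n} C(i,k) · r^{i-k} · u_r(n,i), where u(n,k) = u_0(n,k). -/
import Mathlib

/-- `centralu r n k` is the r-central factorial number with even indices of the first kind. -/
def centralu (r : ℕ) : ℕ → ℕ → ℤ
  | 0, 0 => 1
  | 0, _ + 1 => 0
  | n + 1, 0 => (-1) ^ (n + 1) * ∏ i ∈ Finset.range (n + 1), ((i : ℤ) ^ 2 + r)
  | n + 1, k + 1 => centralu r n k - ((n : ℤ) ^ 2 + r) * centralu r n (k + 1)

lemma centralu_of_lt (r : ℕ) : ∀ n k, n < k → centralu r n k = 0 := by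
  intro n
  induction n with
  | zero =>
    intro k hk
    match k, hk with
    | k + 1, _ => rfl
  | succ n ih =>
    intro k hk
    match k, hk with
    | k + 1, hk =>
      simp only [centralu]
      rw [ih k (by omega), ih (k + 1) (by omega)]
      ring

lemma centralu_succ_zero (r n : ℕ) :
    centralu r (n + 1) 0 = -(((n : ℤ) ^ 2 + r)) * centralu r n 0 := by
  cases n with
  | zero => simp [centralu]
  | succ m =>
    simp only [centralu]
    rw [Finset.prod_range_succ]
    push_cast
    ring

lemma centralu_succ_zero' (r n : ℕ) :
    (-1 : ℤ) ^ (n + 1) * ∏ i ∈ Finset.range (n + 1), ((i : ℤ) ^ 2 + r)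
      = -(((n : ℤ) ^ 2 + r)) * centralu r n 0 := by
  have h := centralu_succ_zero r n
  simp only [centralu] at h
  exact h

lemma centralu_aux (r : ℕ) : ∀ n k, centralu 0 n k =
    ∑ i ∈ Finset.Icc k n, (i.choose k : ℤ) * (r : ℤ) ^ (i - k) * centralu r n i := by
  intro n
  induction n with
  | zero =>
    intro k
    cases k with
    | zero => simp [centralu]
    | succ k =>
      rw [centralu_of_lt _ _ _ (by omega), Finset.Icc_eq_empty (by omega), Finset.sum_empty]
  | succ n ih =>
    intro k
    cases k with
    | zero =>
      have h01 : Finset.Icc 0 (n + 1) = insert 0 (Finset.Icc 1 (n + 1)) := by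
        ext x; simp [Finset.mem_Icc]; omega
      have hmap : Finset.Icc 1 (n + 1) = (Finset.Icc 0 n).map (addRightEmbedding 1) := by
        rw [Finset.map_add_right_Icc]
      rw [h01, Finset.sum_insert (by simp), hmap, Finset.sum_map]
      simp only [addRightEmbedding_apply, Nat.choose_zero_right, Nat.cast_one, one_mul,
        Nat.sub_zero, centralu]
      have hsplit : ∑ j ∈ Finset.Icc 0 n, (r : ℤ) ^ (j + 1) *
            (centralu r n j - ((n : ℤ) ^ 2 + r) * centralu r n (j + 1))
          = (r : ℤ) * ∑ j ∈ Finset.Icc 0 n, (r : ℤ) ^ j * centralu r n j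
            - ((n : ℤ) ^ 2 + r) * ∑ j ∈ Finset.Icc 0 n, (r : ℤ) ^ (j + 1) * centralu r n (j + 1) := by
        rw [Finset.mul_sum, Finset.mul_sum, ← Finset.sum_sub_distrib]
        apply Finset.sum_congr rfl
        intro j _
        ring
      rw [hsplit]
      have hT : ∑ j ∈ Finset.Icc 0 n, (r : ℤ) ^ (j + 1) * centralu r n (j + 1)
          = (∑ j ∈ Finset.Icc 0 n, (r : ℤ) ^ j * centralu r n j) - centralu r n 0 := by
        have : ∑ j ∈ Finset.Icc 0 n, (r : ℤ) ^ (j + 1) * centralu r n (j + 1)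
            = ∑ i ∈ Finset.Icc 1 (n + 1), (r : ℤ) ^ i * centralu r n i := by
          rw [hmap, Finset.sum_map]
          simp only [addRightEmbedding_apply]
        rw [this, Finset.sum_Icc_succ_top (by omega), centralu_of_lt r n (n + 1) (by omega)]
        have : ∑ i ∈ Finset.Icc 1 n, (r : ℤ) ^ i * centralu r n i
            = (∑ j ∈ Finset.Icc 0 n, (r : ℤ) ^ j * centralu r n j) - centralu r n 0 := by
          have h02 : Finset.Icc 0 n = insert 0 (Finset.Icc 1 n) := by
            ext x; simp [Finset.mem_Icc]; omega
          rw [h02, Finset.sum_insert (by simp)]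
          simp only [pow_zero, one_mul]
          ring
        rw [this]
        ring
      rw [hT, centralu_succ_zero' r n, centralu_succ_zero' 0 n]
      have hS := ih 0
      simp only [Nat.choose_zero_right, Nat.cast_one, one_mul, Nat.sub_zero] at hS
      rw [← hS]
      push_cast
      ring
    | succ k =>
      by_cases hk : k ≤ n
      · have hmap : Finset.Icc (k + 1) (n + 1) = (Finset.Icc k n).map (addRightEmbedding 1) := by
          rw [Finset.map_add_right_Icc]
        rw [hmap, Finset.sum_map]
        simp only [addRightEmbedding_apply, Nat.succ_sub_succ, centralu, Nat.choose_succ_succ,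
          Nat.cast_add]
        have hsplit : ∑ j ∈ Finset.Icc k n,
              ((j.choose k : ℤ) + (j.choose (k + 1) : ℤ)) * (r : ℤ) ^ (j - k) *
                (centralu r n j - ((n : ℤ) ^ 2 + r) * centralu r n (j + 1))
            = (∑ j ∈ Finset.Icc k n, (j.choose k : ℤ) * (r : ℤ) ^ (j - k) * centralu r n j)
              + (∑ j ∈ Finset.Icc k n, (j.choose (k + 1) : ℤ) * (r : ℤ) ^ (j - k) * centralu r n j)
              - ((n : ℤ) ^ 2 + r) * ∑ j ∈ Finset.Icc k n,
                  (((j + 1).choose (k + 1) : ℤ)) * (r : ℤ) ^ (j - k) * centralu r n (j + 1) := by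
          rw [Finset.mul_sum, ← Finset.sum_add_distrib, ← Finset.sum_sub_distrib]
          apply Finset.sum_congr rfl
          intro j _
          rw [Nat.choose_succ_succ]
          push_cast
          ring
        rw [hsplit]
        have hB : ∑ j ∈ Finset.Icc k n, (j.choose (k + 1) : ℤ) * (r : ℤ) ^ (j - k) * centralu r n j
            = (r : ℤ) * centralu 0 n (k + 1) := by
          have h02 : Finset.Icc k n = insert k (Finset.Icc (k + 1) n) := by
            ext x; simp [Finset.mem_Icc]; omega
          rw [h02, Finset.sum_insert (by simp), Nat.choose_succ_self]
          have : ∑ j ∈ Finset.Icc (k + 1) n, (j.choose (k + 1) : ℤ) * (r : ℤ) ^ (j - k) * centralu r n j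
              = (r : ℤ) * ∑ j ∈ Finset.Icc (k + 1) n,
                  (j.choose (k + 1) : ℤ) * (r : ℤ) ^ (j - (k + 1)) * centralu r n j := by
            rw [Finset.mul_sum]
            apply Finset.sum_congr rfl
            intro j hj
            rw [Finset.mem_Icc] at hj
            have : j - k = (j - (k + 1)) + 1 := by omega
            rw [this, pow_succ]
            ring
          rw [this, ← ih (k + 1)]
          simp
        have hD : ∑ j ∈ Finset.Icc k n, ((j + 1).choose (k + 1) : ℤ) * (r : ℤ) ^ (j - k) * centralu r n (j + 1)
            = centralu 0 n (k + 1) := by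
          have : ∑ j ∈ Finset.Icc k n, ((j + 1).choose (k + 1) : ℤ) * (r : ℤ) ^ (j - k) * centralu r n (j + 1)
              = ∑ i ∈ Finset.Icc (k + 1) (n + 1),
                  (i.choose (k + 1) : ℤ) * (r : ℤ) ^ (i - (k + 1)) * centralu r n i := by
            rw [hmap, Finset.sum_map]
            simp only [addRightEmbedding_apply, Nat.succ_sub_succ]
          rw [this, Finset.sum_Icc_succ_top (by omega), centralu_of_lt r n (n + 1) (by omega),
            ← ih (k + 1)]
          ring
        rw [hB, hD, ← ih k]
        push_cast
        ring
      · rw [centralu_of_lt _ _ _ (by omega), Finset.Icc_eq_empty (by omega), Finset.sum_empty]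

theorem centralu_zero_eq_sum_centralu (r n k : ℕ) (h : k ≤ n) :
    centralu 0 n k =
      ∑ i ∈ Finset.Icc k n, (i.choose k : ℤ) * (r : ℤ) ^ (i - k) * centralu r n i := by
  exact centralu_aux r n k
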